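/- Let p > 4 and q, r ∈ [2,∞), and let G : ℝ^{3×3} × ℝ^{3×3} × ℝ → ℝ be continuously differentiable with partial derivatives satisfying |∂_F G(F,Z,w)|^{p/(p−1)} + |∂_Z G(F,Z,w)|^{p/(p−2)} + |∂_w G(F,Z,w)|^{p/(p−3)} ≤ C(|F|^p + |Z|^q + |w|^r + 1) for all (F,Z,w) and some constant C > 0. Define ζ(F,Z,w) ∈ ℝ^{3×3} by ζ_{iα}(F,Z,w) = (∂_F G)_{iα} + Σ_{j,k,β,γ} ε_{ijk} ε_{αβγ} F_{jβ} (∂_Z G)_{kγ} + (cof F)_{iα} ∂_w G. Then there exists a constant C' > 0 such that |ζ(F,Z,w)|^{p/(p−1)} ≤ C'(|F|^p + |Z|^q + |w|^r + 1) for all (F,Z,w). -/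

import Mathlib

open Matrix
open scoped BigOperators

attribute [local instance] Matrix.normedAddCommGroup Matrix.normedSpace

/-- The Levi–Civita symbol on `{1,2,3}` (zero-based indices). -/
noncomputable def eps (i j k : Fin 3) : ℝ :=
  (((j.val : ℝ) - (i.val : ℝ)) * ((k.val : ℝ) - (i.val : ℝ))
    * ((k.val : ℝ) - (j.val : ℝ))) / 2

/-- The Frobenius norm of a real `3 × 3` matrix. -/
noncomputable def frob (M : Matrix (Fin 3) (Fin 3) ℝ) : ℝ :=
  Real.sqrt (∑ i, ∑ j, M i j ^ 2)

lemma frob_nonneg (M : Matrix (Fin 3) (Fin 3) ℝ) : 0 ≤ frob M :=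
  Real.sqrt_nonneg _

lemma abs_le_frob (M : Matrix (Fin 3) (Fin 3) ℝ) (i j : Fin 3) :
    |M i j| ≤ frob M := by
  rw [frob, ← Real.sqrt_sq_eq_abs]
  apply Real.sqrt_le_sqrt
  have h1 : M i j ^ 2 ≤ ∑ j', M i j' ^ 2 :=
    Finset.single_le_sum (f := fun j' => M i j' ^ 2)
      (fun _ _ => sq_nonneg _) (Finset.mem_univ j)
  have h2 : (∑ j', M i j' ^ 2) ≤ ∑ i', ∑ j', M i' j' ^ 2 :=
    Finset.single_le_sum (f := fun i' => ∑ j', M i' j' ^ 2)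
      (fun _ _ => Finset.sum_nonneg fun _ _ => sq_nonneg _) (Finset.mem_univ i)
  linarith

lemma frob_le_of_entries (M : Matrix (Fin 3) (Fin 3) ℝ) (B : ℝ) (hB : 0 ≤ B)
    (h : ∀ i j, |M i j| ≤ B) : frob M ≤ 3 * B := by
  rw [frob]
  have hsum : (∑ i, ∑ j, M i j ^ 2) ≤ (3 * B) ^ 2 := by
    have : ∀ i j : Fin 3, M i j ^ 2 ≤ B ^ 2 := by
      intro i j
      have := h i j
      nlinarith [sq_abs (M i j), mul_le_mul this this (abs_nonneg (M i j)) hB]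
    calc (∑ i, ∑ j, M i j ^ 2) ≤ ∑ _i : Fin 3, ∑ _j : Fin 3, B ^ 2 :=
          Finset.sum_le_sum fun i _ => Finset.sum_le_sum fun j _ => this i j
      _ = (3 * B) ^ 2 := by simp [Finset.sum_const]; ring
  calc Real.sqrt (∑ i, ∑ j, M i j ^ 2) ≤ Real.sqrt ((3 * B) ^ 2) :=
        Real.sqrt_le_sqrt hsum
    _ = 3 * B := Real.sqrt_sq (by linarith)

lemma abs_eps_le_one (i j k : Fin 3) : |eps i j k| ≤ 1 := by
  fin_cases i <;> fin_cases j <;> fin_cases k <;> simp [eps] <;> norm_num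

lemma young_aux {u : ℝ} (hu : 1 < u) {a b : ℝ} (ha : 0 ≤ a) (hb : 0 ≤ b) :
    a * b ≤ a ^ u + b ^ (u / (u - 1)) := by
  have hu0 : u ≠ 0 := by linarith
  have hu1 : u - 1 ≠ 0 := by intro h; rw [sub_eq_zero] at h; linarith [h]
  have hconj : u.HolderConjugate (u / (u - 1)) :=
    (Real.holderConjugate_iff_eq_conjExponent hu).2 rfl
  have hy := Real.young_inequality_of_nonneg ha hb hconj
  have h1 : a ^ u / u ≤ a ^ u :=
    div_le_self (Real.rpow_nonneg ha u) hu.le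
  have hv : 1 ≤ u / (u - 1) := by
    rw [le_div_iff₀ (by linarith)]; linarith
  have h2 : b ^ (u / (u - 1)) / (u / (u - 1)) ≤ b ^ (u / (u - 1)) :=
    div_le_self (Real.rpow_nonneg hb _) hv
  linarith

lemma abs_quad {a b c d A : ℝ} (hA : 0 ≤ A) (ha : |a| ≤ A) (hb : |b| ≤ A)
    (hc : |c| ≤ A) (hd : |d| ≤ A) : |a * b - c * d| ≤ 2 * A * A := by
  have h1 : |a * b| ≤ A * A := by
    rw [abs_mul]; exact mul_le_mul ha hb (abs_nonneg _) hA
  have h2 : |c * d| ≤ A * A := by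
    rw [abs_mul]; exact mul_le_mul hc hd (abs_nonneg _) hA
  have := abs_sub (a * b) (c * d)
  linarith

lemma cof_bound (F : Matrix (Fin 3) (Fin 3) ℝ) (i α : Fin 3) :
    |(F.adjugate)ᵀ i α| ≤ 2 * frob F * frob F := by
  rw [Matrix.transpose_apply, Matrix.adjugate_fin_three]
  have hA := frob_nonneg F
  have h := abs_le_frob F
  fin_cases α <;> fin_cases i <;>
    simp only [Matrix.cons_val', Matrix.cons_val_zero, Matrix.cons_val_one,
      Matrix.head_cons, Matrix.empty_val', Matrix.cons_val_fin_one,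
      Matrix.head_fin_const, Matrix.of_apply, Matrix.cons_val_two,
      Matrix.tail_cons, neg_add_eq_sub, Fin.isValue] <;>
    exact abs_quad hA (h _ _) (h _ _) (h _ _) (h _ _)

lemma rpow_add3_le {x y z s : ℝ} (hx : 0 ≤ x) (hy : 0 ≤ y) (hz : 0 ≤ z)
    (hs : 0 ≤ s) :
    (x + y + z) ^ s ≤ 3 ^ s * (x ^ s + y ^ s + z ^ s) := by
  set m := max x (max y z) with hm
  have hxm : x ≤ m := le_max_left _ _
  have hym : y ≤ m := le_trans (le_max_left _ _) (le_max_right _ _)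
  have hzm : z ≤ m := le_trans (le_max_right _ _) (le_max_right _ _)
  have hm0 : 0 ≤ m := le_trans hx hxm
  have hmle : m ^ s ≤ x ^ s + y ^ s + z ^ s := by
    have : m = x ∨ m = y ∨ m = z := by
      rw [hm]
      rcases max_choice x (max y z) with h | h
      · exact Or.inl h
      · rcases max_choice y z with h' | h' <;> rw [h]
        · exact Or.inr (Or.inl h')
        · exact Or.inr (Or.inr h')
    rcases this with h | h | h <;> rw [h] <;>
      linarith [Real.rpow_nonneg hx s, Real.rpow_nonneg hy s,
        Real.rpow_nonneg hz s]
  calc (x + y + z) ^ s ≤ (3 * m) ^ s :=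
        Real.rpow_le_rpow (by linarith) (by linarith) hs
    _ = 3 ^ s * m ^ s := Real.mul_rpow (by norm_num) hm0
    _ ≤ 3 ^ s * (x ^ s + y ^ s + z ^ s) :=
        mul_le_mul_of_nonneg_left hmle (Real.rpow_nonneg (by norm_num) s)

/-- **Growth estimate for the enlarged polyconvex stress `ζ`.**
If `G : ℝ^{3×3} × ℝ^{3×3} × ℝ → ℝ` is `C¹` with partial derivatives satisfying
`|∂_F G|^{p/(p−1)} + |∂_Z G|^{p/(p−2)} + |∂_w G|^{p/(p−3)}
  ≤ C(|F|^p + |Z|^q + |w|^r + 1)`, then the stress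
`ζ_{iα} = (∂_F G)_{iα} + Σ ε_{ijk} ε_{αβγ} F_{jβ} (∂_Z G)_{kγ} + (cof F)_{iα} ∂_w G`
satisfies `|ζ|^{p/(p−1)} ≤ C'(|F|^p + |Z|^q + |w|^r + 1)` for some `C' > 0`. -/
theorem zeta_growth_estimate (p q r C : ℝ)
    (hp : 4 < p) (hq : 2 ≤ q) (hr : 2 ≤ r) (hC : 0 < C)
    (G : Matrix (Fin 3) (Fin 3) ℝ → Matrix (Fin 3) (Fin 3) ℝ → ℝ → ℝ)
    (hG : ContDiff ℝ 1 (fun x : Matrix (Fin 3) (Fin 3) ℝ ×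
        Matrix (Fin 3) (Fin 3) ℝ × ℝ => G x.1 x.2.1 x.2.2))
    (GF GZ : Matrix (Fin 3) (Fin 3) ℝ → Matrix (Fin 3) (Fin 3) ℝ → ℝ →
      Matrix (Fin 3) (Fin 3) ℝ)
    (Gw : Matrix (Fin 3) (Fin 3) ℝ → Matrix (Fin 3) (Fin 3) ℝ → ℝ → ℝ)
    (hGF : ∀ F Z w i α, GF F Z w i α
      = fderiv ℝ (fun F' => G F' Z w) F (Matrix.single i α 1))
    (hGZ : ∀ F Z w k γ, GZ F Z w k γ
      = fderiv ℝ (fun Z' => G F Z' w) Z (Matrix.single k γ 1))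
    (hGw : ∀ F Z w, Gw F Z w = deriv (fun w' => G F Z w') w)
    (hgrow : ∀ F Z w,
      frob (GF F Z w) ^ (p / (p - 1)) + frob (GZ F Z w) ^ (p / (p - 2))
          + |Gw F Z w| ^ (p / (p - 3))
        ≤ C * (frob F ^ p + frob Z ^ q + |w| ^ r + 1))
    (ζ : Matrix (Fin 3) (Fin 3) ℝ → Matrix (Fin 3) (Fin 3) ℝ → ℝ →
      Matrix (Fin 3) (Fin 3) ℝ)
    (hζ : ∀ F Z w i α, ζ F Z w i α
      = GF F Z w i α
        + (∑ j, ∑ k, ∑ β, ∑ γ, eps i j k * eps α β γ * F j β * GZ F Z w k γ)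
        + (F.adjugate)ᵀ i α * Gw F Z w) :
    ∃ C' > 0, ∀ F Z w,
      frob (ζ F Z w) ^ (p / (p - 1))
        ≤ C' * (frob F ^ p + frob Z ^ q + |w| ^ r + 1) := by
  set s : ℝ := p / (p - 1) with hs_def
  have hp1 : (0:ℝ) < p - 1 := by linarith
  have hp1' : (1:ℝ) < p - 1 := by linarith
  have hp2 : p - 2 ≠ 0 := by intro h; nlinarith [h]
  have hp3 : p - 3 ≠ 0 := by intro h; nlinarith [h]
  have hp1ne : p - 1 ≠ 0 := ne_of_gt hp1
  have hpne : p ≠ 0 := by positivity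
  have hs0 : 0 ≤ s := by positivity
  have hu2 : (1:ℝ) < (p - 1) / 2 := by rw [lt_div_iff₀ (by norm_num : (0:ℝ) < 2)]; linarith
  refine ⟨3 ^ s * (3 ^ s * C + 243 ^ s * (1 + C) + 6 ^ s * (1 + C)), by positivity, ?_⟩
  intro F Z w
  set M : ℝ := frob F ^ p + frob Z ^ q + |w| ^ r + 1 with hM_def
  set A : ℝ := frob F with hA_def
  set a : ℝ := frob (GF F Z w) with ha_def
  set b : ℝ := frob (GZ F Z w) with hb_def
  set g : ℝ := |Gw F Z w| with hg_def
  have hA0 : 0 ≤ A := frob_nonneg F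
  have ha0 : 0 ≤ a := frob_nonneg _
  have hb0 : 0 ≤ b := frob_nonneg _
  have hg0 : 0 ≤ g := abs_nonneg _
  have hZq : 0 ≤ frob Z ^ q := Real.rpow_nonneg (frob_nonneg Z) q
  have hwr : 0 ≤ |w| ^ r := Real.rpow_nonneg (abs_nonneg w) r
  have hFp : 0 ≤ A ^ p := Real.rpow_nonneg hA0 p
  have hAM : A ^ p ≤ M := by rw [hM_def]; linarith
  have hgrw := hgrow F Z w
  have has : 0 ≤ a ^ s := Real.rpow_nonneg ha0 s
  have hbs : 0 ≤ b ^ (p / (p - 2)) := Real.rpow_nonneg hb0 _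
  have hgs : 0 ≤ g ^ (p / (p - 3)) := Real.rpow_nonneg hg0 _
  have hga : a ^ s ≤ C * M := by rw [hM_def]; linarith
  have hgb : b ^ (p / (p - 2)) ≤ C * M := by rw [hM_def]; linarith
  have hgg : g ^ (p / (p - 3)) ≤ C * M := by rw [hM_def]; linarith
  -- entrywise bound on ζ
  have hentry : ∀ i α, |ζ F Z w i α| ≤ a + 81 * (A * b) + 2 * A * A * g := by
    intro i α
    rw [hζ]
    set T : ℝ := ∑ j, ∑ k, ∑ β, ∑ γ, eps i j k * eps α β γ * F j β * GZ F Z w k γ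
      with hT_def
    have h1 : |GF F Z w i α| ≤ a := abs_le_frob _ i α
    have h2 : |T| ≤ 81 * (A * b) := by
      rw [hT_def]
      have hterm : ∀ j k β γ : Fin 3,
          |eps i j k * eps α β γ * F j β * GZ F Z w k γ| ≤ A * b := by
        intro j k β γ
        rw [abs_mul, abs_mul, abs_mul]
        calc |eps i j k| * |eps α β γ| * |F j β| * |GZ F Z w k γ|
            ≤ 1 * 1 * A * b := by
              refine mul_le_mul ?_ (abs_le_frob _ k γ) (abs_nonneg _)
                (mul_nonneg (by norm_num) hA0)
              refine mul_le_mul ?_ (abs_le_frob F j β) (abs_nonneg _) (by norm_num)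
              exact mul_le_mul (abs_eps_le_one i j k) (abs_eps_le_one α β γ)
                (abs_nonneg _) zero_le_one
          _ = A * b := by ring
      calc |∑ j, ∑ k, ∑ β, ∑ γ, eps i j k * eps α β γ * F j β * GZ F Z w k γ|
          ≤ ∑ j, ∑ k, ∑ β, ∑ γ, |eps i j k * eps α β γ * F j β * GZ F Z w k γ| := by
            refine (Finset.abs_sum_le_sum_abs _ _).trans
              (Finset.sum_le_sum fun j _ => ?_)
            refine (Finset.abs_sum_le_sum_abs _ _).trans
              (Finset.sum_le_sum fun k _ => ?_)
            refine (Finset.abs_sum_le_sum_abs _ _).trans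
              (Finset.sum_le_sum fun β _ => ?_)
            exact Finset.abs_sum_le_sum_abs _ _
        _ ≤ ∑ _j : Fin 3, ∑ _k : Fin 3, ∑ _β : Fin 3, ∑ _γ : Fin 3, (A * b) :=
            Finset.sum_le_sum fun j _ => Finset.sum_le_sum fun k _ =>
              Finset.sum_le_sum fun β _ => Finset.sum_le_sum fun γ _ =>
                hterm j k β γ
        _ = 81 * (A * b) := by simp [Finset.sum_const]; ring
    have h3 : |(F.adjugate)ᵀ i α * Gw F Z w| ≤ 2 * A * A * g := by
      rw [abs_mul]
      exact mul_le_mul (cof_bound F i α) le_rfl (abs_nonneg _)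
        (mul_nonneg (mul_nonneg (by norm_num) hA0) hA0)
    have habs1 : |GF F Z w i α + T + (F.adjugate)ᵀ i α * Gw F Z w|
        ≤ |GF F Z w i α + T| + |(F.adjugate)ᵀ i α * Gw F Z w| := abs_add_le _ _
    have habs2 : |GF F Z w i α + T| ≤ |GF F Z w i α| + |T| := abs_add_le _ _
    linarith
  have hB0 : 0 ≤ a + 81 * (A * b) + 2 * A * A * g := by
    have := mul_nonneg hA0 hb0
    have := mul_nonneg (mul_nonneg (mul_nonneg (by norm_num : (0:ℝ) ≤ 2) hA0) hA0) hg0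
    linarith
  have hfrob : frob (ζ F Z w) ≤ 3 * a + 243 * (A * b) + 6 * (A * A * g) := by
    have := frob_le_of_entries (ζ F Z w) _ hB0 hentry
    linarith [this]
  -- power step
  have hx0 : 0 ≤ 3 * a := by linarith
  have hy0 : 0 ≤ 243 * (A * b) := by nlinarith [mul_nonneg hA0 hb0]
  have hz0 : 0 ≤ 6 * (A * A * g) := by nlinarith [mul_nonneg (mul_nonneg hA0 hA0) hg0]
  have hstep1 : frob (ζ F Z w) ^ s ≤ (3 * a + 243 * (A * b) + 6 * (A * A * g)) ^ s :=
    Real.rpow_le_rpow (frob_nonneg _) hfrob hs0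
  have hstep2 := rpow_add3_le hx0 hy0 hz0 hs0
  -- x term
  have hxs : (3 * a) ^ s ≤ 3 ^ s * (C * M) := by
    rw [Real.mul_rpow (by norm_num) ha0]
    exact mul_le_mul_of_nonneg_left hga (Real.rpow_nonneg (by norm_num) s)
  -- y term
  have eyA : (A ^ s) ^ (p - 1) = A ^ p := by
    rw [← Real.rpow_mul hA0]; congr 1; rw [hs_def]; field_simp
  have eyb : (b ^ s) ^ ((p - 1) / (p - 1 - 1)) = b ^ (p / (p - 2)) := by
    rw [← Real.rpow_mul hb0]; congr 1
    rw [show p - 1 - 1 = p - 2 by ring, hs_def]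
    field_simp
  have hyoung : A ^ s * b ^ s ≤ A ^ p + b ^ (p / (p - 2)) := by
    have := young_aux hp1' (Real.rpow_nonneg hA0 s) (Real.rpow_nonneg hb0 s)
    rwa [eyA, eyb] at this
  have hys : (243 * (A * b)) ^ s ≤ 243 ^ s * ((1 + C) * M) := by
    rw [Real.mul_rpow (by norm_num) (mul_nonneg hA0 hb0), Real.mul_rpow hA0 hb0]
    refine mul_le_mul_of_nonneg_left ?_ (Real.rpow_nonneg (by norm_num) s)
    calc A ^ s * b ^ s ≤ A ^ p + b ^ (p / (p - 2)) := hyoung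
      _ ≤ M + C * M := by linarith
      _ = (1 + C) * M := by ring
  -- z term
  have ezA : ((A * A) ^ s) ^ ((p - 1) / 2) = A ^ p := by
    have t1 : (A ^ s) ^ ((p - 1) / 2) = A ^ (p / 2) := by
      rw [← Real.rpow_mul hA0]; congr 1; rw [hs_def]; field_simp
    calc ((A * A) ^ s) ^ ((p - 1) / 2)
        = (A ^ s * A ^ s) ^ ((p - 1) / 2) := by rw [Real.mul_rpow hA0 hA0]
      _ = (A ^ s) ^ ((p - 1) / 2) * (A ^ s) ^ ((p - 1) / 2) :=
          Real.mul_rpow (Real.rpow_nonneg hA0 s) (Real.rpow_nonneg hA0 s)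
      _ = A ^ (p / 2) * A ^ (p / 2) := by rw [t1]
      _ = A ^ (p / 2 + p / 2) := (Real.rpow_add' hA0 (by
            intro h; apply hpne; linarith)).symm
      _ = A ^ p := by norm_num
  have ezg : (g ^ s) ^ (((p - 1) / 2) / ((p - 1) / 2 - 1)) = g ^ (p / (p - 3)) := by
    rw [← Real.rpow_mul hg0]; congr 1
    have h32 : (p - 1) / 2 - 1 = (p - 3) / 2 := by ring
    rw [h32, hs_def]
    field_simp
  have hyoung2 : (A * A) ^ s * g ^ s ≤ A ^ p + g ^ (p / (p - 3)) := by
    have := young_aux hu2 (Real.rpow_nonneg (mul_nonneg hA0 hA0) s)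
      (Real.rpow_nonneg hg0 s)
    rwa [ezA, ezg] at this
  have hzs : (6 * (A * A * g)) ^ s ≤ 6 ^ s * ((1 + C) * M) := by
    rw [Real.mul_rpow (by norm_num) (mul_nonneg (mul_nonneg hA0 hA0) hg0),
      Real.mul_rpow (mul_nonneg hA0 hA0) hg0]
    refine mul_le_mul_of_nonneg_left ?_ (Real.rpow_nonneg (by norm_num) s)
    calc (A * A) ^ s * g ^ s ≤ A ^ p + g ^ (p / (p - 3)) := hyoung2
      _ ≤ M + C * M := by linarith
      _ = (1 + C) * M := by ring
  -- combine
  calc frob (ζ F Z w) ^ s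
      ≤ (3 * a + 243 * (A * b) + 6 * (A * A * g)) ^ s := hstep1
    _ ≤ 3 ^ s * ((3 * a) ^ s + (243 * (A * b)) ^ s + (6 * (A * A * g)) ^ s) := hstep2
    _ ≤ 3 ^ s * (3 ^ s * (C * M) + 243 ^ s * ((1 + C) * M) + 6 ^ s * ((1 + C) * M)) := by
        refine mul_le_mul_of_nonneg_left (by linarith) (Real.rpow_nonneg (by norm_num) s)
    _ = 3 ^ s * (3 ^ s * C + 243 ^ s * (1 + C) + 6 ^ s * (1 + C)) * M := by ring
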